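/- arXiv:2405.09970 — 4 statements merged into one kernel-verified Lean document; each statement's English description precedes it below -/
import Mathlib

section
/- In the cut-free calculus GwIKt†, the left conjunction rule is height-preserving invertible: for all n ≥ 1, if Γ[α₁∧α₂] ⇒ β is derivable with a derivation of height n, then Γ[α₁, α₂] ⇒ β is derivable with a derivation of height at most n. -/
/-- Formulas of weak intuitionistic tense logic. -/
inductive Fml : Type
  | var : ℕ → Fml
  | top : Fml
  | bot : Fml
  | imp : Fml → Fml → Fml
  | and : Fml → Fml → Fml
  | or  : Fml → Fml → Fml
  | dia : Fml → Fml   -- ◇ (future diamond)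
  | box : Fml → Fml   -- □ (future box)
  | bdia : Fml → Fml  -- ◆ (past diamond)
  | bbox : Fml → Fml  -- ■ (past box)

/-- Atomic formulas: variables, ⊤, ⊥. -/
def Fml.Atomic : Fml → Prop
  | .var _ => True
  | .top => True
  | .bot => True
  | _ => False

/-- Formula structures: formulas closed under comma, ∘, •. -/
inductive FS : Type
  | fml : Fml → FS
  | comma : FS → FS → FS
  | circ : FS → FS    -- ∘, structural ◇
  | bullet : FS → FS  -- •, structural ◆

/-- Single-hole contexts. -/
inductive Ctx : Type
  | hole : Ctx
  | commaL : Ctx → FS → Ctx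
  | commaR : FS → Ctx → Ctx
  | circ : Ctx → Ctx
  | bullet : Ctx → Ctx

/-- Fill the hole of a context with a structure. -/
def Ctx.plug : Ctx → FS → FS
  | .hole, Δ => Δ
  | .commaL C Γ, Δ => .comma (C.plug Δ) Γ
  | .commaR Γ C, Δ => .comma Γ (C.plug Δ)
  | .circ C, Δ => .circ (C.plug Δ)
  | .bullet C, Δ => .bullet (C.plug Δ)

/-- Multi-hole contexts (for the mix rules Γ[·]ⁿ). -/
inductive MCtx : Type
  | hole : MCtx
  | fml : Fml → MCtx
  | comma : MCtx → MCtx → MCtx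
  | circ : MCtx → MCtx
  | bullet : MCtx → MCtx

/-- Fill all holes of a multi-context with the same structure. -/
def MCtx.plug : MCtx → FS → FS
  | .hole, Δ => Δ
  | .fml α, _ => .fml α
  | .comma C D, Δ => .comma (C.plug Δ) (D.plug Δ)
  | .circ C, Δ => .circ (C.plug Δ)
  | .bullet C, Δ => .bullet (C.plug Δ)

/-- Number n of designated occurrences in Γ[·]ⁿ. -/
def MCtx.holes : MCtx → ℕ
  | .hole => 1
  | .fml _ => 0
  | .comma C D => C.holes + D.holes
  | .circ C => C.holes
  | .bullet C => C.holes

/-- Cut formulas allowed in (Cut_*): not atomic, not □- or ■-formulas, not implications. -/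
def Fml.Starish (α : Fml) : Prop :=
  ¬ α.Atomic ∧ (∀ a, α ≠ .box a) ∧ (∀ a, α ≠ .bbox a) ∧ (∀ a b, α ≠ .imp a b)

/-- Flags selecting the variant of the calculus:
`idFull`: unrestricted identity axiom (Id) vs atomic (Id_A);
`conF`: full formula contraction (Con_F) vs the restricted contractions
(Con_A), (Con_□), (Con_■), (Con_→);
`cut`: the single cut rule (Cut);
`mix`: the four cut-like rules (Mix_A), (Mix_□), (Mix_■), (Mix_→), (Cut_*). -/
structure Rules where
  idFull : Bool
  conF : Bool
  cut : Bool
  mix : Bool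

/-- `DerH R n Γ β`: the sequent Γ ⇒ β has a derivation of height at most `n`
in the calculus determined by `R`. -/
inductive DerH (R : Rules) : ℕ → FS → Fml → Prop
  -- (Id_A)
  | idA (n : ℕ) (α : Fml) : 1 ≤ n → α.Atomic → DerH R n (.fml α) α
  -- (Id), only in calculi with unrestricted identity
  | idF (n : ℕ) (α : Fml) : R.idFull = true → 1 ≤ n → DerH R n (.fml α) α
  -- (⊤)
  | topL (n : ℕ) (Γ : Ctx) (Δ : FS) (β : Fml) :
      DerH R n (Γ.plug (.fml .top)) β → DerH R (n + 1) (Γ.plug Δ) β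
  -- (⊥)
  | botL (n : ℕ) (Γ : Ctx) (Δ : FS) (β : Fml) :
      DerH R n Δ .bot → DerH R (n + 1) (Γ.plug Δ) β
  -- (∧L)
  | andL (n : ℕ) (Γ : Ctx) (α₁ α₂ β : Fml) :
      DerH R n (Γ.plug (.comma (.fml α₁) (.fml α₂))) β →
      DerH R (n + 1) (Γ.plug (.fml (α₁.and α₂))) β
  -- (∧R)
  | andR (n : ℕ) (Γ : FS) (β₁ β₂ : Fml) :
      DerH R n Γ β₁ → DerH R n Γ β₂ → DerH R (n + 1) Γ (β₁.and β₂)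
  -- (∨L)
  | orL (n : ℕ) (Γ : Ctx) (α₁ α₂ β : Fml) :
      DerH R n (Γ.plug (.fml α₁)) β → DerH R n (Γ.plug (.fml α₂)) β →
      DerH R (n + 1) (Γ.plug (.fml (α₁.or α₂))) β
  -- (∨R), i = 1
  | orR₁ (n : ℕ) (Γ : FS) (β₁ β₂ : Fml) :
      DerH R n Γ β₁ → DerH R (n + 1) Γ (β₁.or β₂)
  -- (∨R), i = 2
  | orR₂ (n : ℕ) (Γ : FS) (β₁ β₂ : Fml) :
      DerH R n Γ β₂ → DerH R (n + 1) Γ (β₁.or β₂)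
  -- (→L)
  | impL (n : ℕ) (Γ : Ctx) (Δ : FS) (α₁ α₂ β : Fml) :
      DerH R n Δ α₁ → DerH R n (Γ.plug (.fml α₂)) β →
      DerH R (n + 1) (Γ.plug (.comma Δ (.fml (α₁.imp α₂)))) β
  -- (→R)
  | impR (n : ℕ) (Γ : FS) (β₁ β₂ : Fml) :
      DerH R n (.comma (.fml β₁) Γ) β₂ → DerH R (n + 1) Γ (β₁.imp β₂)
  -- (◇L)
  | diaL (n : ℕ) (Γ : Ctx) (α β : Fml) :
      DerH R n (Γ.plug (.circ (.fml α))) β → DerH R (n + 1) (Γ.plug (.fml (α.dia))) β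
  -- (◇R)
  | diaR (n : ℕ) (Γ : FS) (β : Fml) :
      DerH R n Γ β → DerH R (n + 1) (.circ Γ) (β.dia)
  -- (◆L)
  | bdiaL (n : ℕ) (Γ : Ctx) (α β : Fml) :
      DerH R n (Γ.plug (.bullet (.fml α))) β → DerH R (n + 1) (Γ.plug (.fml (α.bdia))) β
  -- (◆R)
  | bdiaR (n : ℕ) (Γ : FS) (β : Fml) :
      DerH R n Γ β → DerH R (n + 1) (.bullet Γ) (β.bdia)
  -- (■L)
  | bboxL (n : ℕ) (Γ : Ctx) (α β : Fml) :
      DerH R n (Γ.plug (.fml α)) β → DerH R (n + 1) (Γ.plug (.circ (.fml (α.bbox)))) β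
  -- (■R)
  | bboxR (n : ℕ) (Γ : FS) (β : Fml) :
      DerH R n (.circ Γ) β → DerH R (n + 1) Γ (β.bbox)
  -- (□L)
  | boxL (n : ℕ) (Γ : Ctx) (α β : Fml) :
      DerH R n (Γ.plug (.fml α)) β → DerH R (n + 1) (Γ.plug (.bullet (.fml (α.box)))) β
  -- (□R)
  | boxR (n : ℕ) (Γ : FS) (β : Fml) :
      DerH R n (.bullet Γ) β → DerH R (n + 1) Γ (β.box)
  -- (Con∘)
  | conCirc (n : ℕ) (Γ : Ctx) (Δ₁ Δ₂ : FS) (β : Fml) :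
      DerH R n (Γ.plug (.comma (.circ Δ₁) (.circ Δ₂))) β →
      DerH R (n + 1) (Γ.plug (.circ (.comma Δ₁ Δ₂))) β
  -- (Con•)
  | conBullet (n : ℕ) (Γ : Ctx) (Δ₁ Δ₂ : FS) (β : Fml) :
      DerH R n (Γ.plug (.comma (.bullet Δ₁) (.bullet Δ₂))) β →
      DerH R (n + 1) (Γ.plug (.bullet (.comma Δ₁ Δ₂))) β
  -- (Con_F), only with full contraction
  | conF (n : ℕ) (Γ : Ctx) (α β : Fml) : R.conF = true →
      DerH R n (Γ.plug (.comma (.fml α) (.fml α))) β →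
      DerH R (n + 1) (Γ.plug (.fml α)) β
  -- (Con_A), only in the restricted calculi
  | conA (n : ℕ) (Γ : Ctx) (α β : Fml) : R.conF = false → α.Atomic →
      DerH R n (Γ.plug (.comma (.fml α) (.fml α))) β →
      DerH R (n + 1) (Γ.plug (.fml α)) β
  -- (Con_□)
  | conBox (n : ℕ) (Γ : Ctx) (α β : Fml) : R.conF = false →
      DerH R n (Γ.plug (.comma (.fml α.box) (.fml α.box))) β →
      DerH R (n + 1) (Γ.plug (.fml α.box)) β
  -- (Con_■)
  | conBBox (n : ℕ) (Γ : Ctx) (α β : Fml) : R.conF = false →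
      DerH R n (Γ.plug (.comma (.fml α.bbox) (.fml α.bbox))) β →
      DerH R (n + 1) (Γ.plug (.fml α.bbox)) β
  -- (Con_→)
  | conImp (n : ℕ) (Γ : Ctx) (α₁ α₂ β : Fml) : R.conF = false →
      DerH R n (Γ.plug (.comma (.fml (α₁.imp α₂)) (.fml (α₁.imp α₂)))) β →
      DerH R (n + 1) (Γ.plug (.fml (α₁.imp α₂))) β
  -- (Wk), i = 1
  | wk₁ (n : ℕ) (Γ : Ctx) (Δ₁ Δ₂ : FS) (β : Fml) :
      DerH R n (Γ.plug Δ₁) β → DerH R (n + 1) (Γ.plug (.comma Δ₁ Δ₂)) β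
  -- (Wk), i = 2
  | wk₂ (n : ℕ) (Γ : Ctx) (Δ₁ Δ₂ : FS) (β : Fml) :
      DerH R n (Γ.plug Δ₂) β → DerH R (n + 1) (Γ.plug (.comma Δ₁ Δ₂)) β
  -- (Ex)
  | ex (n : ℕ) (Γ : Ctx) (Δ₁ Δ₂ : FS) (β : Fml) :
      DerH R n (Γ.plug (.comma Δ₁ Δ₂)) β → DerH R (n + 1) (Γ.plug (.comma Δ₂ Δ₁)) β
  -- (Dual∘•)
  | dualCB (n : ℕ) (Γ : Ctx) (Δ₁ Δ₂ : FS) (β : Fml) :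
      DerH R n (.comma (.circ Δ₁) Δ₂) .bot →
      DerH R (n + 1) (Γ.plug (.comma Δ₁ (.bullet Δ₂))) β
  -- (Dual•∘)
  | dualBC (n : ℕ) (Γ : Ctx) (Δ₁ Δ₂ : FS) (β : Fml) :
      DerH R n (.comma (.bullet Δ₁) Δ₂) .bot →
      DerH R (n + 1) (Γ.plug (.comma Δ₁ (.circ Δ₂))) β
  -- (Cut)
  | cut (n : ℕ) (Γ : Ctx) (Δ : FS) (α β : Fml) : R.cut = true →
      DerH R n Δ α → DerH R n (Γ.plug (.fml α)) β → DerH R (n + 1) (Γ.plug Δ) β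
  -- (Mix_A)
  | mixA (n : ℕ) (Γ : MCtx) (Δ : FS) (α β : Fml) : R.mix = true →
      α.Atomic → 1 ≤ Γ.holes →
      DerH R n Δ α → DerH R n (Γ.plug (.fml α)) β → DerH R (n + 1) (Γ.plug Δ) β
  -- (Mix_□)
  | mixBox (n : ℕ) (Γ : MCtx) (Δ : FS) (α β : Fml) : R.mix = true →
      1 ≤ Γ.holes →
      DerH R n Δ α.box → DerH R n (Γ.plug (.fml α.box)) β → DerH R (n + 1) (Γ.plug Δ) β
  -- (Mix_■)
  | mixBBox (n : ℕ) (Γ : MCtx) (Δ : FS) (α β : Fml) : R.mix = true →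
      1 ≤ Γ.holes →
      DerH R n Δ α.bbox → DerH R n (Γ.plug (.fml α.bbox)) β → DerH R (n + 1) (Γ.plug Δ) β
  -- (Mix_→)
  | mixImp (n : ℕ) (Γ : MCtx) (Δ : FS) (α₁ α₂ β : Fml) : R.mix = true →
      1 ≤ Γ.holes →
      DerH R n Δ (α₁.imp α₂) → DerH R n (Γ.plug (.fml (α₁.imp α₂))) β →
      DerH R (n + 1) (Γ.plug Δ) β
  -- (Cut_*)
  | cutStar (n : ℕ) (Γ : Ctx) (Δ : FS) (α β : Fml) : R.mix = true →
      α.Starish →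
      DerH R n Δ α → DerH R n (Γ.plug (.fml α)) β → DerH R (n + 1) (Γ.plug Δ) β

/-- Derivability (some height). -/
def Der (R : Rules) (Γ : FS) (β : Fml) : Prop := ∃ n, DerH R n Γ β

/-- GwIKt: full identity, full contraction, with cut. -/
def GwIKt : Rules := ⟨true, true, true, false⟩
/-- GwIKt without the cut rule. -/
def GwIKtCF : Rules := ⟨true, true, false, false⟩
/-- GwIKt† : atomic identity, restricted contractions, with cut. -/
def GwIKtD : Rules := ⟨false, false, true, false⟩
/-- cut-free GwIKt†. -/
def GwIKtDCF : Rules := ⟨false, false, false, false⟩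
/-- GwIKt‡ : cut replaced by the four cut-like rules. -/
def GwIKtDD : Rules := ⟨false, false, false, true⟩

/-- Replacement of some occurrences of `fml (a ∧ b)` by `(fml a, fml b)`. -/
inductive FSRep (a b : Fml) : FS → FS → Prop
  | fml (γ : Fml) : FSRep a b (.fml γ) (.fml γ)
  | conj : FSRep a b (.fml (a.and b)) (.comma (.fml a) (.fml b))
  | comma {Δ₁ Δ₂ Δ₁' Δ₂' : FS} : FSRep a b Δ₁ Δ₁' → FSRep a b Δ₂ Δ₂' →
      FSRep a b (.comma Δ₁ Δ₂) (.comma Δ₁' Δ₂')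
  | circ {Δ Δ' : FS} : FSRep a b Δ Δ' → FSRep a b (.circ Δ) (.circ Δ')
  | bullet {Δ Δ' : FS} : FSRep a b Δ Δ' → FSRep a b (.bullet Δ) (.bullet Δ')

theorem rrefl {a b : Fml} : ∀ Δ, FSRep a b Δ Δ
  | .fml γ => .fml γ
  | .comma Δ₁ Δ₂ => .comma (rrefl Δ₁) (rrefl Δ₂)
  | .circ Δ => .circ (rrefl Δ)
  | .bullet Δ => .bullet (rrefl Δ)

/-- Replacement on contexts. -/
inductive CtxRep (a b : Fml) : Ctx → Ctx → Prop
  | hole : CtxRep a b .hole .hole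
  | commaL {C C' Γ Γ'} : CtxRep a b C C' → FSRep a b Γ Γ' →
      CtxRep a b (.commaL C Γ) (.commaL C' Γ')
  | commaR {C C' Γ Γ'} : FSRep a b Γ Γ' → CtxRep a b C C' →
      CtxRep a b (.commaR Γ C) (.commaR Γ' C')
  | circ {C C'} : CtxRep a b C C' → CtxRep a b (.circ C) (.circ C')
  | bullet {C C'} : CtxRep a b C C' → CtxRep a b (.bullet C) (.bullet C')

theorem crefl {a b : Fml} : ∀ C, CtxRep a b C C
  | .hole => .hole
  | .commaL C Γ => .commaL (crefl C) (rrefl Γ)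
  | .commaR Γ C => .commaR (rrefl Γ) (crefl C)
  | .circ C => .circ (crefl C)
  | .bullet C => .bullet (crefl C)

theorem CtxRep.plug {a b : Fml} {C C' : Ctx} (h : CtxRep a b C C') :
    ∀ {Δ Δ' : FS}, FSRep a b Δ Δ' → FSRep a b (C.plug Δ) (C'.plug Δ') := by
  induction h with
  | hole => intro _ _ h; exact h
  | commaL _ hΓ ih => intro _ _ h; exact .comma (ih h) hΓ
  | commaR hΓ _ ih => intro _ _ h; exact .comma hΓ (ih h)
  | circ _ ih => intro _ _ h; exact .circ (ih h)
  | bullet _ ih => intro _ _ h; exact .bullet (ih h)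

theorem rep_plug_inv {a b : Fml} : ∀ (C : Ctx) (Δ E : FS), FSRep a b (C.plug Δ) E →
    ∃ C' Δ', E = C'.plug Δ' ∧ CtxRep a b C C' ∧ FSRep a b Δ Δ' := by
  intro C
  induction C with
  | hole => intro Δ E h; exact ⟨.hole, E, rfl, .hole, h⟩
  | commaL C Γ ih =>
    intro Δ E h
    cases h with
    | comma h1 h2 =>
      obtain ⟨C', Δ', rfl, hC, hΔ⟩ := ih _ _ h1
      exact ⟨.commaL C' _, Δ', rfl, .commaL hC h2, hΔ⟩
  | commaR Γ C ih =>
    intro Δ E h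
    cases h with
    | comma h1 h2 =>
      obtain ⟨C', Δ', rfl, hC, hΔ⟩ := ih _ _ h2
      exact ⟨.commaR _ C', Δ', rfl, .commaR h1 hC, hΔ⟩
  | circ C ih =>
    intro Δ E h
    cases h with
    | circ h1 =>
      obtain ⟨C', Δ', rfl, hC, hΔ⟩ := ih _ _ h1
      exact ⟨.circ C', Δ', rfl, .circ hC, hΔ⟩
  | bullet C ih =>
    intro Δ E h
    cases h with
    | bullet h1 =>
      obtain ⟨C', Δ', rfl, hC, hΔ⟩ := ih _ _ h1
      exact ⟨.bullet C', Δ', rfl, .bullet hC, hΔ⟩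

theorem DerH.succ {R : Rules} : ∀ {n : ℕ} {Γ : FS} {β : Fml},
    DerH R n Γ β → DerH R (n + 1) Γ β := by
  intro n Γ β h
  induction h with
  | idA n α h ha => exact .idA _ α (by omega) ha
  | idF n α hf h => exact .idF _ α hf (by omega)
  | topL n Γ Δ β h ih => exact .topL _ _ _ _ ih
  | botL n Γ Δ β h ih => exact .botL _ _ _ _ ih
  | andL n Γ α₁ α₂ β h ih => exact .andL _ _ _ _ _ ih
  | andR n Γ β₁ β₂ h1 h2 ih1 ih2 => exact .andR _ _ _ _ ih1 ih2
  | orL n Γ α₁ α₂ β h1 h2 ih1 ih2 => exact .orL _ _ _ _ _ ih1 ih2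
  | orR₁ n Γ β₁ β₂ h ih => exact .orR₁ _ _ _ _ ih
  | orR₂ n Γ β₁ β₂ h ih => exact .orR₂ _ _ _ _ ih
  | impL n Γ Δ α₁ α₂ β h1 h2 ih1 ih2 => exact .impL _ _ _ _ _ _ ih1 ih2
  | impR n Γ β₁ β₂ h ih => exact .impR _ _ _ _ ih
  | diaL n Γ α β h ih => exact .diaL _ _ _ _ ih
  | diaR n Γ β h ih => exact .diaR _ _ _ ih
  | bdiaL n Γ α β h ih => exact .bdiaL _ _ _ _ ih
  | bdiaR n Γ β h ih => exact .bdiaR _ _ _ ih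
  | bboxL n Γ α β h ih => exact .bboxL _ _ _ _ ih
  | bboxR n Γ β h ih => exact .bboxR _ _ _ ih
  | boxL n Γ α β h ih => exact .boxL _ _ _ _ ih
  | boxR n Γ β h ih => exact .boxR _ _ _ ih
  | conCirc n Γ Δ₁ Δ₂ β h ih => exact .conCirc _ _ _ _ _ ih
  | conBullet n Γ Δ₁ Δ₂ β h ih => exact .conBullet _ _ _ _ _ ih
  | conF n Γ α β hf h ih => exact .conF _ _ _ _ hf ih
  | conA n Γ α β hf ha h ih => exact .conA _ _ _ _ hf ha ih
  | conBox n Γ α β hf h ih => exact .conBox _ _ _ _ hf ih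
  | conBBox n Γ α β hf h ih => exact .conBBox _ _ _ _ hf ih
  | conImp n Γ α₁ α₂ β hf h ih => exact .conImp _ _ _ _ _ hf ih
  | wk₁ n Γ Δ₁ Δ₂ β h ih => exact .wk₁ _ _ _ _ _ ih
  | wk₂ n Γ Δ₁ Δ₂ β h ih => exact .wk₂ _ _ _ _ _ ih
  | ex n Γ Δ₁ Δ₂ β h ih => exact .ex _ _ _ _ _ ih
  | dualCB n Γ Δ₁ Δ₂ β h ih => exact .dualCB _ _ _ _ _ ih
  | dualBC n Γ Δ₁ Δ₂ β h ih => exact .dualBC _ _ _ _ _ ih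
  | cut n Γ Δ α β hf h1 h2 ih1 ih2 => exact .cut _ _ _ _ _ hf ih1 ih2
  | mixA n Γ Δ α β hf ha hh h1 h2 ih1 ih2 => exact .mixA _ _ _ _ _ hf ha hh ih1 ih2
  | mixBox n Γ Δ α β hf hh h1 h2 ih1 ih2 => exact .mixBox _ _ _ _ _ hf hh ih1 ih2
  | mixBBox n Γ Δ α β hf hh h1 h2 ih1 ih2 => exact .mixBBox _ _ _ _ _ hf hh ih1 ih2
  | mixImp n Γ Δ α₁ α₂ β hf hh h1 h2 ih1 ih2 => exact .mixImp _ _ _ _ _ _ hf hh ih1 ih2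
  | cutStar n Γ Δ α β hf hs h1 h2 ih1 ih2 => exact .cutStar _ _ _ _ _ hf hs ih1 ih2

theorem repmain {a b : Fml} : ∀ {n : ℕ} {Γ : FS} {β : Fml},
    DerH GwIKtDCF n Γ β → ∀ E, FSRep a b Γ E → DerH GwIKtDCF n E β := by
  intro n Γ β h
  induction h with
  | idA n α h1 ha =>
    intro E hE
    cases hE with
    | fml => exact .idA n α h1 ha
    | conj => simp [Fml.Atomic] at ha
  | idF n α hf h1 => exact absurd hf (by decide)
  | topL n C Δ β h ih =>
    intro E hE
    obtain ⟨C', Δ', rfl, hC, hΔ⟩ := rep_plug_inv _ _ _ hE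
    exact .topL _ _ _ _ (ih _ (hC.plug (.fml _)))
  | botL n C Δ β h ih =>
    intro E hE
    obtain ⟨C', Δ', rfl, hC, hΔ⟩ := rep_plug_inv _ _ _ hE
    exact .botL _ _ _ _ (ih _ hΔ)
  | andL n C γ₁ γ₂ β h ih =>
    intro E hE
    obtain ⟨C', Δ', rfl, hC, hΔ⟩ := rep_plug_inv _ _ _ hE
    cases hΔ with
    | fml => exact .andL _ _ _ _ _ (ih _ (hC.plug (rrefl _)))
    | conj => exact (ih _ (hC.plug (rrefl _))).succ
  | andR n Γ β₁ β₂ h1 h2 ih1 ih2 =>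
    intro E hE
    exact .andR _ _ _ _ (ih1 _ hE) (ih2 _ hE)
  | orL n C γ₁ γ₂ β h1 h2 ih1 ih2 =>
    intro E hE
    obtain ⟨C', Δ', rfl, hC, hΔ⟩ := rep_plug_inv _ _ _ hE
    cases hΔ with
    | fml => exact .orL _ _ _ _ _ (ih1 _ (hC.plug (rrefl _))) (ih2 _ (hC.plug (rrefl _)))
  | orR₁ n Γ β₁ β₂ h ih => intro E hE; exact .orR₁ _ _ _ _ (ih _ hE)
  | orR₂ n Γ β₁ β₂ h ih => intro E hE; exact .orR₂ _ _ _ _ (ih _ hE)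
  | impL n C Δ γ₁ γ₂ β h1 h2 ih1 ih2 =>
    intro E hE
    obtain ⟨C', Δ', rfl, hC, hΔ⟩ := rep_plug_inv _ _ _ hE
    cases hΔ with
    | comma hl hr =>
      cases hr with
      | fml => exact .impL _ _ _ _ _ _ (ih1 _ hl) (ih2 _ (hC.plug (rrefl _)))
  | impR n Γ β₁ β₂ h ih =>
    intro E hE
    exact .impR _ _ _ _ (ih _ (.comma (.fml _) hE))
  | diaL n C γ β h ih =>
    intro E hE
    obtain ⟨C', Δ', rfl, hC, hΔ⟩ := rep_plug_inv _ _ _ hE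
    cases hΔ with
    | fml => exact .diaL _ _ _ _ (ih _ (hC.plug (rrefl _)))
  | diaR n Γ β h ih =>
    intro E hE
    cases hE with
    | circ h1 => exact .diaR _ _ _ (ih _ h1)
  | bdiaL n C γ β h ih =>
    intro E hE
    obtain ⟨C', Δ', rfl, hC, hΔ⟩ := rep_plug_inv _ _ _ hE
    cases hΔ with
    | fml => exact .bdiaL _ _ _ _ (ih _ (hC.plug (rrefl _)))
  | bdiaR n Γ β h ih =>
    intro E hE
    cases hE with
    | bullet h1 => exact .bdiaR _ _ _ (ih _ h1)
  | bboxL n C γ β h ih =>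
    intro E hE
    obtain ⟨C', Δ', rfl, hC, hΔ⟩ := rep_plug_inv _ _ _ hE
    cases hΔ with
    | circ h1 =>
      cases h1 with
      | fml => exact .bboxL _ _ _ _ (ih _ (hC.plug (rrefl _)))
  | bboxR n Γ β h ih =>
    intro E hE
    exact .bboxR _ _ _ (ih _ (.circ hE))
  | boxL n C γ β h ih =>
    intro E hE
    obtain ⟨C', Δ', rfl, hC, hΔ⟩ := rep_plug_inv _ _ _ hE
    cases hΔ with
    | bullet h1 =>
      cases h1 with
      | fml => exact .boxL _ _ _ _ (ih _ (hC.plug (rrefl _)))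
  | boxR n Γ β h ih =>
    intro E hE
    exact .boxR _ _ _ (ih _ (.bullet hE))
  | conCirc n C Δ₁ Δ₂ β h ih =>
    intro E hE
    obtain ⟨C', Δ', rfl, hC, hΔ⟩ := rep_plug_inv _ _ _ hE
    cases hΔ with
    | circ h1 =>
      cases h1 with
      | comma hl hr => exact .conCirc _ _ _ _ _ (ih _ (hC.plug (.comma (.circ hl) (.circ hr))))
  | conBullet n C Δ₁ Δ₂ β h ih =>
    intro E hE
    obtain ⟨C', Δ', rfl, hC, hΔ⟩ := rep_plug_inv _ _ _ hE
    cases hΔ with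
    | bullet h1 =>
      cases h1 with
      | comma hl hr => exact .conBullet _ _ _ _ _ (ih _ (hC.plug (.comma (.bullet hl) (.bullet hr))))
  | conF n C γ β hf h ih => exact absurd hf (by decide)
  | conA n C γ β hf ha h ih =>
    intro E hE
    obtain ⟨C', Δ', rfl, hC, hΔ⟩ := rep_plug_inv _ _ _ hE
    cases hΔ with
    | fml => exact .conA _ _ _ _ hf ha (ih _ (hC.plug (.comma (.fml _) (.fml _))))
    | conj => simp [Fml.Atomic] at ha
  | conBox n C γ β hf h ih =>
    intro E hE
    obtain ⟨C', Δ', rfl, hC, hΔ⟩ := rep_plug_inv _ _ _ hE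
    cases hΔ with
    | fml => exact .conBox _ _ _ _ hf (ih _ (hC.plug (.comma (.fml _) (.fml _))))
  | conBBox n C γ β hf h ih =>
    intro E hE
    obtain ⟨C', Δ', rfl, hC, hΔ⟩ := rep_plug_inv _ _ _ hE
    cases hΔ with
    | fml => exact .conBBox _ _ _ _ hf (ih _ (hC.plug (.comma (.fml _) (.fml _))))
  | conImp n C γ₁ γ₂ β hf h ih =>
    intro E hE
    obtain ⟨C', Δ', rfl, hC, hΔ⟩ := rep_plug_inv _ _ _ hE
    cases hΔ with
    | fml => exact .conImp _ _ _ _ _ hf (ih _ (hC.plug (.comma (.fml _) (.fml _))))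
  | wk₁ n C Δ₁ Δ₂ β h ih =>
    intro E hE
    obtain ⟨C', Δ', rfl, hC, hΔ⟩ := rep_plug_inv _ _ _ hE
    cases hΔ with
    | comma hl hr => exact .wk₁ _ _ _ _ _ (ih _ (hC.plug hl))
  | wk₂ n C Δ₁ Δ₂ β h ih =>
    intro E hE
    obtain ⟨C', Δ', rfl, hC, hΔ⟩ := rep_plug_inv _ _ _ hE
    cases hΔ with
    | comma hl hr => exact .wk₂ _ _ _ _ _ (ih _ (hC.plug hr))
  | ex n C Δ₁ Δ₂ β h ih =>
    intro E hE
    obtain ⟨C', Δ', rfl, hC, hΔ⟩ := rep_plug_inv _ _ _ hE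
    cases hΔ with
    | comma hl hr => exact .ex _ _ _ _ _ (ih _ (hC.plug (.comma hr hl)))
  | dualCB n C Δ₁ Δ₂ β h ih =>
    intro E hE
    obtain ⟨C', Δ', rfl, hC, hΔ⟩ := rep_plug_inv _ _ _ hE
    cases hΔ with
    | comma hl hr =>
      cases hr with
      | bullet hr' => exact .dualCB _ _ _ _ _ (ih _ (.comma (.circ hl) hr'))
  | dualBC n C Δ₁ Δ₂ β h ih =>
    intro E hE
    obtain ⟨C', Δ', rfl, hC, hΔ⟩ := rep_plug_inv _ _ _ hE
    cases hΔ with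
    | comma hl hr =>
      cases hr with
      | circ hr' => exact .dualBC _ _ _ _ _ (ih _ (.comma (.bullet hl) hr'))
  | cut _ _ _ _ _ hf => exact absurd hf (by decide)
  | mixA _ _ _ _ _ hf => exact absurd hf (by decide)
  | mixBox _ _ _ _ _ hf => exact absurd hf (by decide)
  | mixBBox _ _ _ _ _ hf => exact absurd hf (by decide)
  | mixImp _ _ _ _ _ _ hf => exact absurd hf (by decide)
  | cutStar _ _ _ _ _ hf => exact absurd hf (by decide)

/-- height-preserving invertibility of (∧L) in cut-free GwIKt†. -/
theorem stmt1_andL_invertible :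
    ∀ n : ℕ, 1 ≤ n → ∀ (Γ : Ctx) (α₁ α₂ β : Fml),
      DerH GwIKtDCF n (Γ.plug (.fml (α₁.and α₂))) β →
      DerH GwIKtDCF n (Γ.plug (.comma (.fml α₁) (.fml α₂))) β := by
  intro n _ Γ α₁ α₂ β h
  exact repmain h _ ((crefl Γ).plug FSRep.conj)
end

section
/- In the cut-free calculus GwIKt†, the left disjunction rule is height-preserving invertible: for all n ≥ 1, if Γ[α₁∨α₂] ⇒ β is derivable with height n, then both Γ[α₁] ⇒ β and Γ[α₂] ⇒ β are derivable with height at most n. -/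
namespace Inv2

/-- `Rep φ ψ Δ Δ'`: Δ' is Δ with some occurrences of `.fml φ` replaced by `.fml ψ`. -/
inductive Rep (φ ψ : Fml) : FS → FS → Prop
  | refl (Δ : FS) : Rep φ ψ Δ Δ
  | repl : Rep φ ψ (.fml φ) (.fml ψ)
  | comma {A B A' B'} : Rep φ ψ A A' → Rep φ ψ B B' → Rep φ ψ (.comma A B) (.comma A' B')
  | circ {A A'} : Rep φ ψ A A' → Rep φ ψ (.circ A) (.circ A')
  | bullet {A A'} : Rep φ ψ A A' → Rep φ ψ (.bullet A) (.bullet A')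

variable {φ ψ : Fml}

lemma fml_inv {χ : Fml} {Z : FS} (h : Rep φ ψ (.fml χ) Z) :
    Z = .fml χ ∨ (χ = φ ∧ Z = .fml ψ) := by
  cases h with
  | refl => exact Or.inl rfl
  | repl => exact Or.inr ⟨rfl, rfl⟩

lemma comma_inv {A B Z} (h : Rep φ ψ (.comma A B) Z) :
    ∃ A' B', Z = .comma A' B' ∧ Rep φ ψ A A' ∧ Rep φ ψ B B' := by
  cases h with
  | refl => exact ⟨A, B, rfl, .refl _, .refl _⟩
  | comma h1 h2 => exact ⟨_, _, rfl, h1, h2⟩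

lemma circ_inv {A Z} (h : Rep φ ψ (.circ A) Z) :
    ∃ A', Z = .circ A' ∧ Rep φ ψ A A' := by
  cases h with
  | refl => exact ⟨A, rfl, .refl _⟩
  | circ h1 => exact ⟨_, rfl, h1⟩

lemma bullet_inv {A Z} (h : Rep φ ψ (.bullet A) Z) :
    ∃ A', Z = .bullet A' ∧ Rep φ ψ A A' := by
  cases h with
  | refl => exact ⟨A, rfl, .refl _⟩
  | bullet h1 => exact ⟨_, rfl, h1⟩

lemma plug_inv : ∀ (C : Ctx) {X Z : FS}, Rep φ ψ (C.plug X) Z →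
    ∃ (C' : Ctx) (X' : FS), Z = C'.plug X' ∧ Rep φ ψ X X' ∧
      ∀ U V, Rep φ ψ U V → Rep φ ψ (C.plug U) (C'.plug V)
  | .hole, X, Z, h => ⟨.hole, Z, rfl, h, fun _ _ h => h⟩
  | .commaL C Γ, X, Z, h => by
      obtain ⟨A', B', rfl, h1, h2⟩ := comma_inv h
      obtain ⟨C', X', rfl, hX, hcl⟩ := plug_inv C h1
      exact ⟨.commaL C' B', X', rfl, hX, fun U V h => .comma (hcl U V h) h2⟩
  | .commaR Γ C, X, Z, h => by
      obtain ⟨A', B', rfl, h1, h2⟩ := comma_inv h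
      obtain ⟨C', X', rfl, hX, hcl⟩ := plug_inv C h2
      exact ⟨.commaR A' C', X', rfl, hX, fun U V h => .comma h1 (hcl U V h)⟩
  | .circ C, X, Z, h => by
      obtain ⟨A', rfl, h1⟩ := circ_inv h
      obtain ⟨C', X', rfl, hX, hcl⟩ := plug_inv C h1
      exact ⟨.circ C', X', rfl, hX, fun U V h => .circ (hcl U V h)⟩
  | .bullet C, X, Z, h => by
      obtain ⟨A', rfl, h1⟩ := bullet_inv h
      obtain ⟨C', X', rfl, hX, hcl⟩ := plug_inv C h1
      exact ⟨.bullet C', X', rfl, hX, fun U V h => .bullet (hcl U V h)⟩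

lemma rep_plug_self (C : Ctx) : Rep φ ψ (C.plug (.fml φ)) (C.plug (.fml ψ)) := by
  induction C with
  | hole => exact .repl
  | commaL C Γ ih => exact .comma ih (.refl _)
  | commaR Γ C ih => exact .comma (.refl _) ih
  | circ C ih => exact .circ ih
  | bullet C ih => exact .bullet ih

/-- Height monotonicity. -/
lemma DerH_succ {R : Rules} {n : ℕ} {Γ : FS} {β : Fml}
    (h : DerH R n Γ β) : DerH R (n + 1) Γ β := by
  induction h with
  | idA n α h1 h2 => exact .idA _ _ (le_trans h1 (Nat.le_succ _)) h2
  | idF n α hR h1 => exact .idF _ _ hR (le_trans h1 (Nat.le_succ _))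
  | topL n Γ Δ β _ ih => exact .topL _ Γ Δ β ih
  | botL n Γ Δ β _ ih => exact .botL _ Γ Δ β ih
  | andL n Γ a b β _ ih => exact .andL _ Γ a b β ih
  | andR n Γ b1 b2 _ _ ih1 ih2 => exact .andR _ Γ b1 b2 ih1 ih2
  | orL n Γ a b β _ _ ih1 ih2 => exact .orL _ Γ a b β ih1 ih2
  | orR₁ n Γ b1 b2 _ ih => exact .orR₁ _ Γ b1 b2 ih
  | orR₂ n Γ b1 b2 _ ih => exact .orR₂ _ Γ b1 b2 ih
  | impL n Γ Δ a1 a2 β _ _ ih1 ih2 => exact .impL _ Γ Δ a1 a2 β ih1 ih2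
  | impR n Γ b1 b2 _ ih => exact .impR _ Γ b1 b2 ih
  | diaL n Γ a β _ ih => exact .diaL _ Γ a β ih
  | diaR n Γ β _ ih => exact .diaR _ Γ β ih
  | bdiaL n Γ a β _ ih => exact .bdiaL _ Γ a β ih
  | bdiaR n Γ β _ ih => exact .bdiaR _ Γ β ih
  | bboxL n Γ a β _ ih => exact .bboxL _ Γ a β ih
  | bboxR n Γ β _ ih => exact .bboxR _ Γ β ih
  | boxL n Γ a β _ ih => exact .boxL _ Γ a β ih
  | boxR n Γ β _ ih => exact .boxR _ Γ β ih
  | conCirc n Γ Δ1 Δ2 β _ ih => exact .conCirc _ Γ Δ1 Δ2 β ih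
  | conBullet n Γ Δ1 Δ2 β _ ih => exact .conBullet _ Γ Δ1 Δ2 β ih
  | conF n Γ a β hR _ ih => exact .conF _ Γ a β hR ih
  | conA n Γ a β hR hA _ ih => exact .conA _ Γ a β hR hA ih
  | conBox n Γ a β hR _ ih => exact .conBox _ Γ a β hR ih
  | conBBox n Γ a β hR _ ih => exact .conBBox _ Γ a β hR ih
  | conImp n Γ a1 a2 β hR _ ih => exact .conImp _ Γ a1 a2 β hR ih
  | wk₁ n Γ Δ1 Δ2 β _ ih => exact .wk₁ _ Γ Δ1 Δ2 β ih
  | wk₂ n Γ Δ1 Δ2 β _ ih => exact .wk₂ _ Γ Δ1 Δ2 β ih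
  | ex n Γ Δ1 Δ2 β _ ih => exact .ex _ Γ Δ1 Δ2 β ih
  | dualCB n Γ Δ1 Δ2 β _ ih => exact .dualCB _ Γ Δ1 Δ2 β ih
  | dualBC n Γ Δ1 Δ2 β _ ih => exact .dualBC _ Γ Δ1 Δ2 β ih
  | cut n Γ Δ a β hR _ _ ih1 ih2 => exact .cut _ Γ Δ a β hR ih1 ih2
  | mixA n Γ Δ a β hR hA hH _ _ ih1 ih2 => exact .mixA _ Γ Δ a β hR hA hH ih1 ih2
  | mixBox n Γ Δ a β hR hH _ _ ih1 ih2 => exact .mixBox _ Γ Δ a β hR hH ih1 ih2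
  | mixBBox n Γ Δ a β hR hH _ _ ih1 ih2 => exact .mixBBox _ Γ Δ a β hR hH ih1 ih2
  | mixImp n Γ Δ a1 a2 β hR hH _ _ ih1 ih2 => exact .mixImp _ Γ Δ a1 a2 β hR hH ih1 ih2
  | cutStar n Γ Δ a β hR hS _ _ ih1 ih2 => exact .cutStar _ Γ Δ a β hR hS ih1 ih2

lemma main (α₁ α₂ ψ0 : Fml) (hψ : ψ0 = α₁ ∨ ψ0 = α₂) :
    ∀ {n : ℕ} {Δ : FS} {β : Fml}, DerH GwIKtDCF n Δ β →
      ∀ Δ', Rep (Fml.or α₁ α₂) ψ0 Δ Δ' → DerH GwIKtDCF n Δ' β := by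
  intro n Δ β h
  induction h with
  | idA n α h1 h2 =>
      intro Δ' hrep
      rcases fml_inv hrep with rfl | ⟨rfl, rfl⟩
      · exact .idA _ _ h1 h2
      · exact h2.elim
  | idF n α hR h1 => exact absurd hR (by simp [GwIKtDCF])
  | topL n C Δ β _ ih =>
      intro Δ' hrep
      obtain ⟨C', X', rfl, hX, hcl⟩ := plug_inv C hrep
      exact .topL _ C' X' β (ih _ (hcl _ _ (.refl _)))
  | botL n C Δ β _ ih =>
      intro Δ' hrep
      obtain ⟨C', X', rfl, hX, hcl⟩ := plug_inv C hrep
      exact .botL _ C' X' β (ih _ hX)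
  | andL n C a b β _ ih =>
      intro Δ' hrep
      obtain ⟨C', X', rfl, hX, hcl⟩ := plug_inv C hrep
      rcases fml_inv hX with rfl | ⟨heq, rfl⟩
      · exact .andL _ C' a b β (ih _ (hcl _ _ (.refl _)))
      · exact absurd heq (by simp)
  | andR n Γ b1 b2 _ _ ih1 ih2 =>
      intro Δ' hrep
      exact .andR _ Δ' b1 b2 (ih1 _ hrep) (ih2 _ hrep)
  | orL n C a b β h1 h2 ih1 ih2 =>
      intro Δ' hrep
      obtain ⟨C', X', rfl, hX, hcl⟩ := plug_inv C hrep
      rcases fml_inv hX with rfl | ⟨heq, rfl⟩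
      · exact .orL _ C' a b β (ih1 _ (hcl _ _ (.refl _))) (ih2 _ (hcl _ _ (.refl _)))
      · injection heq with e1 e2
        subst e1; subst e2
        rcases hψ with rfl | rfl
        · exact DerH_succ (ih1 _ (hcl _ _ (.refl _)))
        · exact DerH_succ (ih2 _ (hcl _ _ (.refl _)))
  | orR₁ n Γ b1 b2 _ ih =>
      intro Δ' hrep
      exact .orR₁ _ Δ' b1 b2 (ih _ hrep)
  | orR₂ n Γ b1 b2 _ ih =>
      intro Δ' hrep
      exact .orR₂ _ Δ' b1 b2 (ih _ hrep)
  | impL n C Δ a1 a2 β _ _ ih1 ih2 =>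
      intro Δ' hrep
      obtain ⟨C', X', rfl, hX, hcl⟩ := plug_inv C hrep
      obtain ⟨D', F', rfl, hD, hF⟩ := comma_inv hX
      rcases fml_inv hF with rfl | ⟨heq, rfl⟩
      · exact .impL _ C' D' a1 a2 β (ih1 _ hD) (ih2 _ (hcl _ _ (.refl _)))
      · exact absurd heq (by simp)
  | impR n Γ b1 b2 _ ih =>
      intro Δ' hrep
      exact .impR _ Δ' b1 b2 (ih _ (.comma (.refl _) hrep))
  | diaL n C a β _ ih =>
      intro Δ' hrep
      obtain ⟨C', X', rfl, hX, hcl⟩ := plug_inv C hrep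
      rcases fml_inv hX with rfl | ⟨heq, rfl⟩
      · exact .diaL _ C' a β (ih _ (hcl _ _ (.refl _)))
      · exact absurd heq (by simp)
  | diaR n Γ β _ ih =>
      intro Δ' hrep
      obtain ⟨A', rfl, h1⟩ := circ_inv hrep
      exact .diaR _ A' β (ih _ h1)
  | bdiaL n C a β _ ih =>
      intro Δ' hrep
      obtain ⟨C', X', rfl, hX, hcl⟩ := plug_inv C hrep
      rcases fml_inv hX with rfl | ⟨heq, rfl⟩
      · exact .bdiaL _ C' a β (ih _ (hcl _ _ (.refl _)))
      · exact absurd heq (by simp)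
  | bdiaR n Γ β _ ih =>
      intro Δ' hrep
      obtain ⟨A', rfl, h1⟩ := bullet_inv hrep
      exact .bdiaR _ A' β (ih _ h1)
  | bboxL n C a β _ ih =>
      intro Δ' hrep
      obtain ⟨C', X', rfl, hX, hcl⟩ := plug_inv C hrep
      obtain ⟨A', rfl, h1⟩ := circ_inv hX
      rcases fml_inv h1 with rfl | ⟨heq, rfl⟩
      · exact .bboxL _ C' a β (ih _ (hcl _ _ (.refl _)))
      · exact absurd heq (by simp)
  | bboxR n Γ β _ ih =>
      intro Δ' hrep
      exact .bboxR _ Δ' β (ih _ (.circ hrep))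
  | boxL n C a β _ ih =>
      intro Δ' hrep
      obtain ⟨C', X', rfl, hX, hcl⟩ := plug_inv C hrep
      obtain ⟨A', rfl, h1⟩ := bullet_inv hX
      rcases fml_inv h1 with rfl | ⟨heq, rfl⟩
      · exact .boxL _ C' a β (ih _ (hcl _ _ (.refl _)))
      · exact absurd heq (by simp)
  | boxR n Γ β _ ih =>
      intro Δ' hrep
      exact .boxR _ Δ' β (ih _ (.bullet hrep))
  | conCirc n C Δ1 Δ2 β _ ih =>
      intro Δ' hrep
      obtain ⟨C', X', rfl, hX, hcl⟩ := plug_inv C hrep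
      obtain ⟨A', rfl, h1⟩ := circ_inv hX
      obtain ⟨D1, D2, rfl, hd1, hd2⟩ := comma_inv h1
      exact .conCirc _ C' D1 D2 β (ih _ (hcl _ _ (.comma (.circ hd1) (.circ hd2))))
  | conBullet n C Δ1 Δ2 β _ ih =>
      intro Δ' hrep
      obtain ⟨C', X', rfl, hX, hcl⟩ := plug_inv C hrep
      obtain ⟨A', rfl, h1⟩ := bullet_inv hX
      obtain ⟨D1, D2, rfl, hd1, hd2⟩ := comma_inv h1
      exact .conBullet _ C' D1 D2 β (ih _ (hcl _ _ (.comma (.bullet hd1) (.bullet hd2))))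
  | conF n C a β hR _ ih => exact absurd hR (by simp [GwIKtDCF])
  | conA n C a β hR hA _ ih =>
      intro Δ' hrep
      obtain ⟨C', X', rfl, hX, hcl⟩ := plug_inv C hrep
      rcases fml_inv hX with rfl | ⟨rfl, rfl⟩
      · exact .conA _ C' a β hR hA (ih _ (hcl _ _ (.refl _)))
      · exact hA.elim
  | conBox n C a β hR _ ih =>
      intro Δ' hrep
      obtain ⟨C', X', rfl, hX, hcl⟩ := plug_inv C hrep
      rcases fml_inv hX with rfl | ⟨heq, rfl⟩
      · exact .conBox _ C' a β hR (ih _ (hcl _ _ (.refl _)))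
      · exact absurd heq (by simp)
  | conBBox n C a β hR _ ih =>
      intro Δ' hrep
      obtain ⟨C', X', rfl, hX, hcl⟩ := plug_inv C hrep
      rcases fml_inv hX with rfl | ⟨heq, rfl⟩
      · exact .conBBox _ C' a β hR (ih _ (hcl _ _ (.refl _)))
      · exact absurd heq (by simp)
  | conImp n C a1 a2 β hR _ ih =>
      intro Δ' hrep
      obtain ⟨C', X', rfl, hX, hcl⟩ := plug_inv C hrep
      rcases fml_inv hX with rfl | ⟨heq, rfl⟩
      · exact .conImp _ C' a1 a2 β hR (ih _ (hcl _ _ (.refl _)))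
      · exact absurd heq (by simp)
  | wk₁ n C Δ1 Δ2 β _ ih =>
      intro Δ' hrep
      obtain ⟨C', X', rfl, hX, hcl⟩ := plug_inv C hrep
      obtain ⟨D1, D2, rfl, hd1, hd2⟩ := comma_inv hX
      exact .wk₁ _ C' D1 D2 β (ih _ (hcl _ _ hd1))
  | wk₂ n C Δ1 Δ2 β _ ih =>
      intro Δ' hrep
      obtain ⟨C', X', rfl, hX, hcl⟩ := plug_inv C hrep
      obtain ⟨D1, D2, rfl, hd1, hd2⟩ := comma_inv hX
      exact .wk₂ _ C' D1 D2 β (ih _ (hcl _ _ hd2))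
  | ex n C Δ1 Δ2 β _ ih =>
      intro Δ' hrep
      obtain ⟨C', X', rfl, hX, hcl⟩ := plug_inv C hrep
      obtain ⟨D2, D1, rfl, hd2, hd1⟩ := comma_inv hX
      exact .ex _ C' D1 D2 β (ih _ (hcl _ _ (.comma hd1 hd2)))
  | dualCB n C Δ1 Δ2 β _ ih =>
      intro Δ' hrep
      obtain ⟨C', X', rfl, hX, hcl⟩ := plug_inv C hrep
      obtain ⟨D1, B', rfl, hd1, hb⟩ := comma_inv hX
      obtain ⟨D2, rfl, hd2⟩ := bullet_inv hb
      exact .dualCB _ C' D1 D2 β (ih _ (.comma (.circ hd1) hd2))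
  | dualBC n C Δ1 Δ2 β _ ih =>
      intro Δ' hrep
      obtain ⟨C', X', rfl, hX, hcl⟩ := plug_inv C hrep
      obtain ⟨D1, B', rfl, hd1, hb⟩ := comma_inv hX
      obtain ⟨D2, rfl, hd2⟩ := circ_inv hb
      exact .dualBC _ C' D1 D2 β (ih _ (.comma (.bullet hd1) hd2))
  | cut n C Δ a β hR _ _ ih1 ih2 => exact absurd hR (by simp [GwIKtDCF])
  | mixA n C Δ a β hR hA hH _ _ ih1 ih2 => exact absurd hR (by simp [GwIKtDCF])
  | mixBox n C Δ a β hR hH _ _ ih1 ih2 => exact absurd hR (by simp [GwIKtDCF])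
  | mixBBox n C Δ a β hR hH _ _ ih1 ih2 => exact absurd hR (by simp [GwIKtDCF])
  | mixImp n C Δ a1 a2 β hR hH _ _ ih1 ih2 => exact absurd hR (by simp [GwIKtDCF])
  | cutStar n C Δ a β hR hS _ _ ih1 ih2 => exact absurd hR (by simp [GwIKtDCF])

end Inv2

/-- height-preserving invertibility of (∨L) in cut-free GwIKt†. -/
theorem stmt2_orL_invertible :
    ∀ n : ℕ, 1 ≤ n → ∀ (Γ : Ctx) (α₁ α₂ β : Fml),
      DerH GwIKtDCF n (Γ.plug (.fml (α₁.or α₂))) β →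
      DerH GwIKtDCF n (Γ.plug (.fml α₁)) β ∧ DerH GwIKtDCF n (Γ.plug (.fml α₂)) β := by
  intro n _ Γ α₁ α₂ β h
  exact ⟨Inv2.main α₁ α₂ α₁ (Or.inl rfl) h _ (Inv2.rep_plug_self Γ),
         Inv2.main α₁ α₂ α₂ (Or.inr rfl) h _ (Inv2.rep_plug_self Γ)⟩
end

section
/- In the cut-free calculus GwIKt†, the left diamond rule is height-preserving invertible: for all n ≥ 1, if Γ[◇α] ⇒ β is derivable with height n, then Γ[∘α] ⇒ β is derivable with height at most n. -/
/-! Auxiliary development for statement 3. -/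

/-- Height monotonicity: heights can be bumped by one. -/
lemma derH_succ {R : Rules} : ∀ {n Δ β}, DerH R n Δ β → DerH R (n+1) Δ β := by
  intro n Δ β h
  induction h with
  | idA n α h1 h2 => exact .idA _ _ (by omega) h2
  | idF n α hf h1 => exact .idF _ _ hf (by omega)
  | topL n Γ Δ β h ih => exact .topL _ Γ Δ β ih
  | botL n Γ Δ β h ih => exact .botL _ Γ Δ β ih
  | andL n Γ α₁ α₂ β h ih => exact .andL _ Γ α₁ α₂ β ih
  | andR n Γ β₁ β₂ h1 h2 ih1 ih2 => exact .andR _ Γ β₁ β₂ ih1 ih2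
  | orL n Γ α₁ α₂ β h1 h2 ih1 ih2 => exact .orL _ Γ α₁ α₂ β ih1 ih2
  | orR₁ n Γ β₁ β₂ h ih => exact .orR₁ _ Γ β₁ β₂ ih
  | orR₂ n Γ β₁ β₂ h ih => exact .orR₂ _ Γ β₁ β₂ ih
  | impL n Γ Δ α₁ α₂ β h1 h2 ih1 ih2 => exact .impL _ Γ Δ α₁ α₂ β ih1 ih2
  | impR n Γ β₁ β₂ h ih => exact .impR _ Γ β₁ β₂ ih
  | diaL n Γ α β h ih => exact .diaL _ Γ α β ih
  | diaR n Γ β h ih => exact .diaR _ Γ β ih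
  | bdiaL n Γ α β h ih => exact .bdiaL _ Γ α β ih
  | bdiaR n Γ β h ih => exact .bdiaR _ Γ β ih
  | bboxL n Γ α β h ih => exact .bboxL _ Γ α β ih
  | bboxR n Γ β h ih => exact .bboxR _ Γ β ih
  | boxL n Γ α β h ih => exact .boxL _ Γ α β ih
  | boxR n Γ β h ih => exact .boxR _ Γ β ih
  | conCirc n Γ Δ₁ Δ₂ β h ih => exact .conCirc _ Γ Δ₁ Δ₂ β ih
  | conBullet n Γ Δ₁ Δ₂ β h ih => exact .conBullet _ Γ Δ₁ Δ₂ β ih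
  | conF n Γ α β hf h ih => exact .conF _ Γ α β hf ih
  | conA n Γ α β hf ha h ih => exact .conA _ Γ α β hf ha ih
  | conBox n Γ α β hf h ih => exact .conBox _ Γ α β hf ih
  | conBBox n Γ α β hf h ih => exact .conBBox _ Γ α β hf ih
  | conImp n Γ α₁ α₂ β hf h ih => exact .conImp _ Γ α₁ α₂ β hf ih
  | wk₁ n Γ Δ₁ Δ₂ β h ih => exact .wk₁ _ Γ Δ₁ Δ₂ β ih
  | wk₂ n Γ Δ₁ Δ₂ β h ih => exact .wk₂ _ Γ Δ₁ Δ₂ β ih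
  | ex n Γ Δ₁ Δ₂ β h ih => exact .ex _ Γ Δ₁ Δ₂ β ih
  | dualCB n Γ Δ₁ Δ₂ β h ih => exact .dualCB _ Γ Δ₁ Δ₂ β ih
  | dualBC n Γ Δ₁ Δ₂ β h ih => exact .dualBC _ Γ Δ₁ Δ₂ β ih
  | cut n Γ Δ α β hf h1 h2 ih1 ih2 => exact .cut _ Γ Δ α β hf ih1 ih2
  | mixA n Γ Δ α β hf ha hh h1 h2 ih1 ih2 => exact .mixA _ Γ Δ α β hf ha hh ih1 ih2
  | mixBox n Γ Δ α β hf hh h1 h2 ih1 ih2 => exact .mixBox _ Γ Δ α β hf hh ih1 ih2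
  | mixBBox n Γ Δ α β hf hh h1 h2 ih1 ih2 => exact .mixBBox _ Γ Δ α β hf hh ih1 ih2
  | mixImp n Γ Δ α₁ α₂ β hf hh h1 h2 ih1 ih2 => exact .mixImp _ Γ Δ α₁ α₂ β hf hh ih1 ih2
  | cutStar n Γ Δ α β hf hs h1 h2 ih1 ih2 => exact .cutStar _ Γ Δ α β hf hs ih1 ih2

/-- `DLRep α Δ Θ`: `Θ` is obtained from `Δ` by replacing some (possibly zero)
occurrences of the formula `◇α` by `∘α`. -/
inductive DLRep (α : Fml) : FS → FS → Prop
  | refl (Δ : FS) : DLRep α Δ Δ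
  | dia : DLRep α (.fml α.dia) (.circ (.fml α))
  | comma {a a' b b'} : DLRep α a a' → DLRep α b b' → DLRep α (.comma a b) (.comma a' b')
  | circ {a a'} : DLRep α a a' → DLRep α (.circ a) (.circ a')
  | bullet {a a'} : DLRep α a a' → DLRep α (.bullet a) (.bullet a')

lemma dlrep_fml {α φ Θ} (h : DLRep α (.fml φ) Θ) :
    Θ = .fml φ ∨ (φ = α.dia ∧ Θ = .circ (.fml α)) := by
  cases h with
  | refl => exact Or.inl rfl
  | dia => exact Or.inr ⟨rfl, rfl⟩

lemma dlrep_comma {α a b Θ} (h : DLRep α (.comma a b) Θ) :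
    ∃ a' b', Θ = .comma a' b' ∧ DLRep α a a' ∧ DLRep α b b' := by
  cases h with
  | refl => exact ⟨a, b, rfl, .refl _, .refl _⟩
  | comma h1 h2 => exact ⟨_, _, rfl, h1, h2⟩

lemma dlrep_circ {α a Θ} (h : DLRep α (.circ a) Θ) :
    ∃ a', Θ = .circ a' ∧ DLRep α a a' := by
  cases h with
  | refl => exact ⟨a, rfl, .refl _⟩
  | circ h1 => exact ⟨_, rfl, h1⟩

lemma dlrep_bullet {α a Θ} (h : DLRep α (.bullet a) Θ) :
    ∃ a', Θ = .bullet a' ∧ DLRep α a a' := by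
  cases h with
  | refl => exact ⟨a, rfl, .refl _⟩
  | bullet h1 => exact ⟨_, rfl, h1⟩

/-- The corresponding relation on single-hole contexts. -/
inductive DLRepC (α : Fml) : Ctx → Ctx → Prop
  | hole : DLRepC α .hole .hole
  | commaL {C D Γ Γ'} : DLRepC α C D → DLRep α Γ Γ' → DLRepC α (.commaL C Γ) (.commaL D Γ')
  | commaR {C D Γ Γ'} : DLRep α Γ Γ' → DLRepC α C D → DLRepC α (.commaR Γ C) (.commaR Γ' D)
  | circ {C D} : DLRepC α C D → DLRepC α (.circ C) (.circ D)
  | bullet {C D} : DLRepC α C D → DLRepC α (.bullet C) (.bullet D)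

lemma dlrepC_refl (α : Fml) : ∀ C : Ctx, DLRepC α C C := by
  intro C
  induction C with
  | hole => exact .hole
  | commaL C Γ ih => exact .commaL ih (.refl _)
  | commaR Γ C ih => exact .commaR (.refl _) ih
  | circ C ih => exact .circ ih
  | bullet C ih => exact .bullet ih

lemma dlrep_plug {α : Fml} : ∀ {C D : Ctx} {X Y : FS},
    DLRepC α C D → DLRep α X Y → DLRep α (C.plug X) (D.plug Y) := by
  intro C D X Y hC hX
  induction hC with
  | hole => exact hX
  | commaL _ h ih => exact .comma ih h
  | commaR h _ ih => exact .comma h ih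
  | circ _ ih => exact .circ ih
  | bullet _ ih => exact .bullet ih

lemma dlrep_plug_inv {α : Fml} {X : FS} :
    ∀ (C : Ctx) (Θ : FS), DLRep α (C.plug X) Θ →
      ∃ (D : Ctx) (Y : FS), Θ = D.plug Y ∧ DLRepC α C D ∧ DLRep α X Y := by
  intro C
  induction C with
  | hole => intro Θ h; exact ⟨.hole, Θ, rfl, .hole, h⟩
  | commaL C Γ ih =>
      intro Θ h
      obtain ⟨a', b', rfl, h1, h2⟩ := dlrep_comma h
      obtain ⟨D, Y, rfl, hC, hY⟩ := ih a' h1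
      exact ⟨.commaL D b', Y, rfl, .commaL hC h2, hY⟩
  | commaR Γ C ih =>
      intro Θ h
      obtain ⟨a', b', rfl, h1, h2⟩ := dlrep_comma h
      obtain ⟨D, Y, rfl, hC, hY⟩ := ih b' h2
      exact ⟨.commaR a' D, Y, rfl, .commaR h1 hC, hY⟩
  | circ C ih =>
      intro Θ h
      obtain ⟨a', rfl, h1⟩ := dlrep_circ h
      obtain ⟨D, Y, rfl, hC, hY⟩ := ih a' h1
      exact ⟨.circ D, Y, rfl, .circ hC, hY⟩
  | bullet C ih =>
      intro Θ h
      obtain ⟨a', rfl, h1⟩ := dlrep_bullet h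
      obtain ⟨D, Y, rfl, hC, hY⟩ := ih a' h1
      exact ⟨.bullet D, Y, rfl, .bullet hC, hY⟩

/-- Main lemma: derivability in cut-free GwIKt† is preserved, with the same
height bound, under replacing occurrences of `◇α` by `∘α`. -/
lemma dlrep_derH (α : Fml) : ∀ {n : ℕ} {Δ : FS} {β : Fml},
    DerH GwIKtDCF n Δ β → ∀ Θ, DLRep α Δ Θ → DerH GwIKtDCF n Θ β := by
  intro n Δ β h
  induction h with
  | idA n φ h1 h2 =>
      intro Θ hr
      rcases dlrep_fml hr with rfl | ⟨rfl, rfl⟩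
      · exact .idA n φ h1 h2
      · simp [Fml.Atomic] at h2
  | idF n φ hf h1 => simp [GwIKtDCF] at hf
  | topL n Γ Δ β h ih =>
      intro Θ hr
      obtain ⟨D, Y, rfl, hC, hY⟩ := dlrep_plug_inv Γ Θ hr
      exact .topL n D Y β (ih _ (dlrep_plug hC (.refl _)))
  | botL n Γ Δ β h ih =>
      intro Θ hr
      obtain ⟨D, Y, rfl, hC, hY⟩ := dlrep_plug_inv Γ Θ hr
      exact .botL n D Y β (ih _ hY)
  | andL n Γ α₁ α₂ β h ih =>
      intro Θ hr
      obtain ⟨D, Y, rfl, hC, hY⟩ := dlrep_plug_inv Γ Θ hr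
      rcases dlrep_fml hY with rfl | ⟨hφ, _⟩
      · exact .andL n D α₁ α₂ β (ih _ (dlrep_plug hC (.refl _)))
      · cases hφ
  | andR n Γ β₁ β₂ h1 h2 ih1 ih2 =>
      intro Θ hr
      exact .andR n Θ β₁ β₂ (ih1 Θ hr) (ih2 Θ hr)
  | orL n Γ α₁ α₂ β h1 h2 ih1 ih2 =>
      intro Θ hr
      obtain ⟨D, Y, rfl, hC, hY⟩ := dlrep_plug_inv Γ Θ hr
      rcases dlrep_fml hY with rfl | ⟨hφ, _⟩
      · exact .orL n D α₁ α₂ β (ih1 _ (dlrep_plug hC (.refl _))) (ih2 _ (dlrep_plug hC (.refl _)))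
      · cases hφ
  | orR₁ n Γ β₁ β₂ h ih => intro Θ hr; exact .orR₁ n Θ β₁ β₂ (ih Θ hr)
  | orR₂ n Γ β₁ β₂ h ih => intro Θ hr; exact .orR₂ n Θ β₁ β₂ (ih Θ hr)
  | impL n Γ Δ α₁ α₂ β h1 h2 ih1 ih2 =>
      intro Θ hr
      obtain ⟨D, Y, rfl, hC, hY⟩ := dlrep_plug_inv Γ Θ hr
      obtain ⟨Y₁, Y₂, rfl, hY1, hY2⟩ := dlrep_comma hY
      rcases dlrep_fml hY2 with rfl | ⟨hφ, _⟩
      · exact .impL n D Y₁ α₁ α₂ β (ih1 _ hY1) (ih2 _ (dlrep_plug hC (.refl _)))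
      · cases hφ
  | impR n Γ β₁ β₂ h ih =>
      intro Θ hr
      exact .impR n Θ β₁ β₂ (ih _ (.comma (.refl _) hr))
  | diaL n Γ α₀ β h ih =>
      intro Θ hr
      obtain ⟨D, Y, rfl, hC, hY⟩ := dlrep_plug_inv Γ Θ hr
      rcases dlrep_fml hY with rfl | ⟨hφ, rfl⟩
      · exact .diaL n D α₀ β (ih _ (dlrep_plug hC (.refl _)))
      · cases hφ
        exact derH_succ (ih _ (dlrep_plug hC (.refl _)))
  | diaR n Γ β h ih =>
      intro Θ hr
      obtain ⟨Θ', rfl, h1⟩ := dlrep_circ hr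
      exact .diaR n Θ' β (ih _ h1)
  | bdiaL n Γ α₀ β h ih =>
      intro Θ hr
      obtain ⟨D, Y, rfl, hC, hY⟩ := dlrep_plug_inv Γ Θ hr
      rcases dlrep_fml hY with rfl | ⟨hφ, _⟩
      · exact .bdiaL n D α₀ β (ih _ (dlrep_plug hC (.refl _)))
      · cases hφ
  | bdiaR n Γ β h ih =>
      intro Θ hr
      obtain ⟨Θ', rfl, h1⟩ := dlrep_bullet hr
      exact .bdiaR n Θ' β (ih _ h1)
  | bboxL n Γ α₀ β h ih =>
      intro Θ hr
      obtain ⟨D, Y, rfl, hC, hY⟩ := dlrep_plug_inv Γ Θ hr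
      obtain ⟨Y', rfl, h1⟩ := dlrep_circ hY
      rcases dlrep_fml h1 with rfl | ⟨hφ, _⟩
      · exact .bboxL n D α₀ β (ih _ (dlrep_plug hC (.refl _)))
      · cases hφ
  | bboxR n Γ β h ih =>
      intro Θ hr
      exact .bboxR n Θ β (ih _ (.circ hr))
  | boxL n Γ α₀ β h ih =>
      intro Θ hr
      obtain ⟨D, Y, rfl, hC, hY⟩ := dlrep_plug_inv Γ Θ hr
      obtain ⟨Y', rfl, h1⟩ := dlrep_bullet hY
      rcases dlrep_fml h1 with rfl | ⟨hφ, _⟩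
      · exact .boxL n D α₀ β (ih _ (dlrep_plug hC (.refl _)))
      · cases hφ
  | boxR n Γ β h ih =>
      intro Θ hr
      exact .boxR n Θ β (ih _ (.bullet hr))
  | conCirc n Γ Δ₁ Δ₂ β h ih =>
      intro Θ hr
      obtain ⟨D, Y, rfl, hC, hY⟩ := dlrep_plug_inv Γ Θ hr
      obtain ⟨Y', rfl, h1⟩ := dlrep_circ hY
      obtain ⟨Y₁, Y₂, rfl, h2, h3⟩ := dlrep_comma h1
      exact .conCirc n D Y₁ Y₂ β (ih _ (dlrep_plug hC (.comma (.circ h2) (.circ h3))))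
  | conBullet n Γ Δ₁ Δ₂ β h ih =>
      intro Θ hr
      obtain ⟨D, Y, rfl, hC, hY⟩ := dlrep_plug_inv Γ Θ hr
      obtain ⟨Y', rfl, h1⟩ := dlrep_bullet hY
      obtain ⟨Y₁, Y₂, rfl, h2, h3⟩ := dlrep_comma h1
      exact .conBullet n D Y₁ Y₂ β (ih _ (dlrep_plug hC (.comma (.bullet h2) (.bullet h3))))
  | conF n Γ α₀ β hf h ih => simp [GwIKtDCF] at hf
  | conA n Γ α₀ β hf ha h ih =>
      intro Θ hr
      obtain ⟨D, Y, rfl, hC, hY⟩ := dlrep_plug_inv Γ Θ hr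
      rcases dlrep_fml hY with rfl | ⟨rfl, _⟩
      · exact .conA n D α₀ β hf ha (ih _ (dlrep_plug hC (.refl _)))
      · simp [Fml.Atomic] at ha
  | conBox n Γ α₀ β hf h ih =>
      intro Θ hr
      obtain ⟨D, Y, rfl, hC, hY⟩ := dlrep_plug_inv Γ Θ hr
      rcases dlrep_fml hY with rfl | ⟨hφ, _⟩
      · exact .conBox n D α₀ β hf (ih _ (dlrep_plug hC (.refl _)))
      · cases hφ
  | conBBox n Γ α₀ β hf h ih =>
      intro Θ hr
      obtain ⟨D, Y, rfl, hC, hY⟩ := dlrep_plug_inv Γ Θ hr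
      rcases dlrep_fml hY with rfl | ⟨hφ, _⟩
      · exact .conBBox n D α₀ β hf (ih _ (dlrep_plug hC (.refl _)))
      · cases hφ
  | conImp n Γ α₁ α₂ β hf h ih =>
      intro Θ hr
      obtain ⟨D, Y, rfl, hC, hY⟩ := dlrep_plug_inv Γ Θ hr
      rcases dlrep_fml hY with rfl | ⟨hφ, _⟩
      · exact .conImp n D α₁ α₂ β hf (ih _ (dlrep_plug hC (.refl _)))
      · cases hφ
  | wk₁ n Γ Δ₁ Δ₂ β h ih =>
      intro Θ hr
      obtain ⟨D, Y, rfl, hC, hY⟩ := dlrep_plug_inv Γ Θ hr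
      obtain ⟨Y₁, Y₂, rfl, h1, h2⟩ := dlrep_comma hY
      exact .wk₁ n D Y₁ Y₂ β (ih _ (dlrep_plug hC h1))
  | wk₂ n Γ Δ₁ Δ₂ β h ih =>
      intro Θ hr
      obtain ⟨D, Y, rfl, hC, hY⟩ := dlrep_plug_inv Γ Θ hr
      obtain ⟨Y₁, Y₂, rfl, h1, h2⟩ := dlrep_comma hY
      exact .wk₂ n D Y₁ Y₂ β (ih _ (dlrep_plug hC h2))
  | ex n Γ Δ₁ Δ₂ β h ih =>
      intro Θ hr
      obtain ⟨D, Y, rfl, hC, hY⟩ := dlrep_plug_inv Γ Θ hr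
      obtain ⟨Y₂, Y₁, rfl, h2, h1⟩ := dlrep_comma hY
      exact .ex n D Y₁ Y₂ β (ih _ (dlrep_plug hC (.comma h1 h2)))
  | dualCB n Γ Δ₁ Δ₂ β h ih =>
      intro Θ hr
      obtain ⟨D, Y, rfl, hC, hY⟩ := dlrep_plug_inv Γ Θ hr
      obtain ⟨Y₁, Y₂', rfl, h1, h2'⟩ := dlrep_comma hY
      obtain ⟨Y₂, rfl, h2⟩ := dlrep_bullet h2'
      exact .dualCB n D Y₁ Y₂ β (ih _ (.comma (.circ h1) h2))
  | dualBC n Γ Δ₁ Δ₂ β h ih =>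
      intro Θ hr
      obtain ⟨D, Y, rfl, hC, hY⟩ := dlrep_plug_inv Γ Θ hr
      obtain ⟨Y₁, Y₂', rfl, h1, h2'⟩ := dlrep_comma hY
      obtain ⟨Y₂, rfl, h2⟩ := dlrep_circ h2'
      exact .dualBC n D Y₁ Y₂ β (ih _ (.comma (.bullet h1) h2))
  | cut n Γ Δ α₀ β hf h1 h2 ih1 ih2 => simp [GwIKtDCF] at hf
  | mixA n Γ Δ α₀ β hf ha hh h1 h2 ih1 ih2 => simp [GwIKtDCF] at hf
  | mixBox n Γ Δ α₀ β hf hh h1 h2 ih1 ih2 => simp [GwIKtDCF] at hf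
  | mixBBox n Γ Δ α₀ β hf hh h1 h2 ih1 ih2 => simp [GwIKtDCF] at hf
  | mixImp n Γ Δ α₁ α₂ β hf hh h1 h2 ih1 ih2 => simp [GwIKtDCF] at hf
  | cutStar n Γ Δ α₀ β hf hs h1 h2 ih1 ih2 => simp [GwIKtDCF] at hf

/-- height-preserving invertibility of (◇L) in cut-free GwIKt†. -/
theorem stmt3_diaL_invertible :
    ∀ n : ℕ, 1 ≤ n → ∀ (Γ : Ctx) (α β : Fml),
      DerH GwIKtDCF n (Γ.plug (.fml α.dia)) β →
      DerH GwIKtDCF n (Γ.plug (.circ (.fml α))) β := by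
  intro n _ Γ α β h
  exact dlrep_derH α h _ (dlrep_plug (dlrepC_refl α Γ) DLRep.dia)
end

section
/- The calculi GwIKt and GwIKt† derive exactly the same sequents: for any sequent Γ ⇒ β, GwIKt ⊢ Γ ⇒ β if and only if GwIKt† ⊢ Γ ⇒ β. -/
theorem DerH.mono {R : Rules} {n : ℕ} {Γ : FS} {β : Fml} (h : DerH R n Γ β) :
    ∀ m, n ≤ m → DerH R m Γ β := by
  induction h
  case idA n α h1 h2 => exact fun m hm => DerH.idA m α (h1.trans hm) h2
  case idF n α hR h1 => exact fun m hm => DerH.idF m α hR (h1.trans hm)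
  case cut n Γ Δ α β hc h1 h2 ih1 ih2 =>
    rintro (_|m) hm
    · omega
    · exact DerH.cut m Γ Δ α β hc (ih1 m (by omega)) (ih2 m (by omega))
  case mixA n Γ Δ α β hc ha hh h1 h2 ih1 ih2 =>
    rintro (_|m) hm
    · omega
    · exact DerH.mixA m Γ Δ α β hc ha hh (ih1 m (by omega)) (ih2 m (by omega))
  case mixBox n Γ Δ α β hc hh h1 h2 ih1 ih2 =>
    rintro (_|m) hm
    · omega
    · exact DerH.mixBox m Γ Δ α β hc hh (ih1 m (by omega)) (ih2 m (by omega))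
  case mixBBox n Γ Δ α β hc hh h1 h2 ih1 ih2 =>
    rintro (_|m) hm
    · omega
    · exact DerH.mixBBox m Γ Δ α β hc hh (ih1 m (by omega)) (ih2 m (by omega))
  case mixImp n Γ Δ α₁ α₂ β hc hh h1 h2 ih1 ih2 =>
    rintro (_|m) hm
    · omega
    · exact DerH.mixImp m Γ Δ α₁ α₂ β hc hh (ih1 m (by omega)) (ih2 m (by omega))
  case cutStar n Γ Δ α β hc hs h1 h2 ih1 ih2 =>
    rintro (_|m) hm
    · omega
    · exact DerH.cutStar m Γ Δ α β hc hs (ih1 m (by omega)) (ih2 m (by omega))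
  all_goals intro m hm
  all_goals cases m with
  | zero => omega
  | succ m =>
    have hm' := Nat.le_of_succ_le_succ hm
    solve_by_elim [DerH.topL, DerH.botL, DerH.andL, DerH.andR, DerH.orL, DerH.orR₁,
      DerH.orR₂, DerH.impL, DerH.impR, DerH.diaL, DerH.diaR, DerH.bdiaL, DerH.bdiaR,
      DerH.bboxL, DerH.bboxR, DerH.boxL, DerH.boxR, DerH.conCirc, DerH.conBullet,
      DerH.conF, DerH.conA, DerH.conBox, DerH.conBBox, DerH.conImp, DerH.wk₁, DerH.wk₂,
      DerH.ex, DerH.dualCB, DerH.dualBC]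
theorem idAdm : ∀ α : Fml, Der GwIKtD (.fml α) α := by
  intro α
  induction α with
  | var k => exact ⟨1, .idA 1 _ le_rfl trivial⟩
  | top => exact ⟨1, .idA 1 _ le_rfl trivial⟩
  | bot => exact ⟨1, .idA 1 _ le_rfl trivial⟩
  | imp a b iha ihb =>
    obtain ⟨m1, h1⟩ := iha; obtain ⟨m2, h2⟩ := ihb
    refine ⟨max m1 m2 + 2, .impR _ _ _ _ ?_⟩
    exact .impL _ .hole (.fml a) a b b (h1.mono _ (le_max_left _ _))
      (h2.mono _ (le_max_right _ _))
  | and a b iha ihb =>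
    obtain ⟨m1, h1⟩ := iha; obtain ⟨m2, h2⟩ := ihb
    refine ⟨max m1 m2 + 3, .andR _ _ _ _ ?_ ?_⟩
    · exact .andL _ .hole a b a (.wk₁ _ .hole (.fml a) (.fml b) a
        (h1.mono _ (le_max_left _ _)))
    · exact .andL _ .hole a b b (.wk₂ _ .hole (.fml a) (.fml b) b
        (h2.mono _ (le_max_right _ _)))
  | or a b iha ihb =>
    obtain ⟨m1, h1⟩ := iha; obtain ⟨m2, h2⟩ := ihb
    refine ⟨max m1 m2 + 2, .orL _ .hole a b _ ?_ ?_⟩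
    · exact .orR₁ _ _ a b (h1.mono _ (le_max_left _ _))
    · exact .orR₂ _ _ a b (h2.mono _ (le_max_right _ _))
  | dia a ih =>
    obtain ⟨m, h⟩ := ih
    exact ⟨m + 2, .diaL _ .hole a _ (.diaR _ _ _ h)⟩
  | bdia a ih =>
    obtain ⟨m, h⟩ := ih
    exact ⟨m + 2, .bdiaL _ .hole a _ (.bdiaR _ _ _ h)⟩
  | box a ih =>
    obtain ⟨m, h⟩ := ih
    exact ⟨m + 2, .boxR _ _ _ (.boxL _ .hole a a h)⟩
  | bbox a ih =>
    obtain ⟨m, h⟩ := ih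
    exact ⟨m + 2, .bboxR _ _ _ (.bboxL _ .hole a a h)⟩

theorem conAdm (Γ : Ctx) (α β : Fml)
    (h : Der GwIKtD (Γ.plug (.comma (.fml α) (.fml α))) β) :
    Der GwIKtD (Γ.plug (.fml α)) β := by
  obtain ⟨m, hm⟩ := h
  obtain ⟨k, hk⟩ := idAdm α
  refine ⟨max (m + 1) (k + 1) + 1, .cut _ Γ (.fml α) (α.and α) β rfl ?_ ?_⟩
  · exact (DerH.andR k (.fml α) α α hk hk).mono _ (le_max_right _ _)
  · exact (DerH.andL m Γ α α β hm).mono _ (le_max_left _ _)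
theorem ofDagger : ∀ {n : ℕ} {Γ : FS} {β : Fml}, DerH GwIKtD n Γ β → DerH GwIKt n Γ β := by
  intro n Γ β h
  induction h
  case idA n α h1 h2 => exact .idA n α h1 h2
  case idF n α hR h1 => exact absurd hR (by decide)
  case conF n Γ α β hc _ _ => exact absurd hc (by decide)
  case conA n Γ α β _ _ _ ih => exact .conF n Γ α β rfl ih
  case conBox n Γ α β _ _ ih => exact .conF n Γ _ β rfl ih
  case conBBox n Γ α β _ _ ih => exact .conF n Γ _ β rfl ih
  case conImp n Γ α₁ α₂ β _ _ ih => exact .conF n Γ _ β rfl ih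
  case cut n Γ Δ α β _ _ _ ih1 ih2 => exact .cut n Γ Δ α β rfl ih1 ih2
  case mixA _ _ _ _ _ hc _ _ _ _ _ _ => exact absurd hc (by decide)
  case mixBox _ _ _ _ _ hc _ _ _ _ _ => exact absurd hc (by decide)
  case mixBBox _ _ _ _ _ hc _ _ _ _ _ => exact absurd hc (by decide)
  case mixImp _ _ _ _ _ _ hc _ _ _ _ _ => exact absurd hc (by decide)
  case cutStar _ _ _ _ _ hc _ _ _ _ _ => exact absurd hc (by decide)
  all_goals solve_by_elim [DerH.topL, DerH.botL, DerH.andL, DerH.andR, DerH.orL,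
    DerH.orR₁, DerH.orR₂, DerH.impL, DerH.impR, DerH.diaL, DerH.diaR, DerH.bdiaL,
    DerH.bdiaR, DerH.bboxL, DerH.bboxR, DerH.boxL, DerH.boxR, DerH.conCirc,
    DerH.conBullet, DerH.wk₁, DerH.wk₂, DerH.ex, DerH.dualCB, DerH.dualBC]

theorem toDagger : ∀ {n : ℕ} {Γ : FS} {β : Fml}, DerH GwIKt n Γ β → Der GwIKtD Γ β := by
  intro n Γ β h
  induction h
  case idA n α h1 h2 => exact ⟨1, .idA 1 α le_rfl h2⟩
  case idF n α _ _ => exact idAdm α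
  case topL n Γ Δ β _ ih => obtain ⟨m, hm⟩ := ih; exact ⟨m + 1, .topL m Γ Δ β hm⟩
  case botL n Γ Δ β _ ih => obtain ⟨m, hm⟩ := ih; exact ⟨m + 1, .botL m Γ Δ β hm⟩
  case andL n Γ α₁ α₂ β _ ih => obtain ⟨m, hm⟩ := ih; exact ⟨m + 1, .andL m Γ α₁ α₂ β hm⟩
  case andR n Γ β₁ β₂ _ _ ih1 ih2 =>
    obtain ⟨m1, h1⟩ := ih1; obtain ⟨m2, h2⟩ := ih2
    exact ⟨max m1 m2 + 1, .andR _ Γ β₁ β₂ (h1.mono _ (le_max_left _ _))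
      (h2.mono _ (le_max_right _ _))⟩
  case orL n Γ α₁ α₂ β _ _ ih1 ih2 =>
    obtain ⟨m1, h1⟩ := ih1; obtain ⟨m2, h2⟩ := ih2
    exact ⟨max m1 m2 + 1, .orL _ Γ α₁ α₂ β (h1.mono _ (le_max_left _ _))
      (h2.mono _ (le_max_right _ _))⟩
  case orR₁ n Γ β₁ β₂ _ ih => obtain ⟨m, hm⟩ := ih; exact ⟨m + 1, .orR₁ m Γ β₁ β₂ hm⟩
  case orR₂ n Γ β₁ β₂ _ ih => obtain ⟨m, hm⟩ := ih; exact ⟨m + 1, .orR₂ m Γ β₁ β₂ hm⟩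
  case impL n Γ Δ α₁ α₂ β _ _ ih1 ih2 =>
    obtain ⟨m1, h1⟩ := ih1; obtain ⟨m2, h2⟩ := ih2
    exact ⟨max m1 m2 + 1, .impL _ Γ Δ α₁ α₂ β (h1.mono _ (le_max_left _ _))
      (h2.mono _ (le_max_right _ _))⟩
  case impR n Γ β₁ β₂ _ ih => obtain ⟨m, hm⟩ := ih; exact ⟨m + 1, .impR m Γ β₁ β₂ hm⟩
  case diaL n Γ α β _ ih => obtain ⟨m, hm⟩ := ih; exact ⟨m + 1, .diaL m Γ α β hm⟩
  case diaR n Γ β _ ih => obtain ⟨m, hm⟩ := ih; exact ⟨m + 1, .diaR m Γ β hm⟩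
  case bdiaL n Γ α β _ ih => obtain ⟨m, hm⟩ := ih; exact ⟨m + 1, .bdiaL m Γ α β hm⟩
  case bdiaR n Γ β _ ih => obtain ⟨m, hm⟩ := ih; exact ⟨m + 1, .bdiaR m Γ β hm⟩
  case bboxL n Γ α β _ ih => obtain ⟨m, hm⟩ := ih; exact ⟨m + 1, .bboxL m Γ α β hm⟩
  case bboxR n Γ β _ ih => obtain ⟨m, hm⟩ := ih; exact ⟨m + 1, .bboxR m Γ β hm⟩
  case boxL n Γ α β _ ih => obtain ⟨m, hm⟩ := ih; exact ⟨m + 1, .boxL m Γ α β hm⟩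
  case boxR n Γ β _ ih => obtain ⟨m, hm⟩ := ih; exact ⟨m + 1, .boxR m Γ β hm⟩
  case conCirc n Γ Δ₁ Δ₂ β _ ih =>
    obtain ⟨m, hm⟩ := ih; exact ⟨m + 1, .conCirc m Γ Δ₁ Δ₂ β hm⟩
  case conBullet n Γ Δ₁ Δ₂ β _ ih =>
    obtain ⟨m, hm⟩ := ih; exact ⟨m + 1, .conBullet m Γ Δ₁ Δ₂ β hm⟩
  case conF n Γ α β _ _ ih => exact conAdm Γ α β ih
  case conA _ _ _ _ hc _ _ _ => exact absurd hc (by decide)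
  case conBox _ _ _ _ hc _ _ => exact absurd hc (by decide)
  case conBBox _ _ _ _ hc _ _ => exact absurd hc (by decide)
  case conImp _ _ _ _ _ hc _ _ => exact absurd hc (by decide)
  case wk₁ n Γ Δ₁ Δ₂ β _ ih => obtain ⟨m, hm⟩ := ih; exact ⟨m + 1, .wk₁ m Γ Δ₁ Δ₂ β hm⟩
  case wk₂ n Γ Δ₁ Δ₂ β _ ih => obtain ⟨m, hm⟩ := ih; exact ⟨m + 1, .wk₂ m Γ Δ₁ Δ₂ β hm⟩
  case ex n Γ Δ₁ Δ₂ β _ ih => obtain ⟨m, hm⟩ := ih; exact ⟨m + 1, .ex m Γ Δ₁ Δ₂ β hm⟩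
  case dualCB n Γ Δ₁ Δ₂ β _ ih =>
    obtain ⟨m, hm⟩ := ih; exact ⟨m + 1, .dualCB m Γ Δ₁ Δ₂ β hm⟩
  case dualBC n Γ Δ₁ Δ₂ β _ ih =>
    obtain ⟨m, hm⟩ := ih; exact ⟨m + 1, .dualBC m Γ Δ₁ Δ₂ β hm⟩
  case cut n Γ Δ α β _ _ _ ih1 ih2 =>
    obtain ⟨m1, h1⟩ := ih1; obtain ⟨m2, h2⟩ := ih2
    exact ⟨max m1 m2 + 1, .cut _ Γ Δ α β rfl (h1.mono _ (le_max_left _ _))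
      (h2.mono _ (le_max_right _ _))⟩
  case mixA _ _ _ _ _ hc _ _ _ _ _ _ => exact absurd hc (by decide)
  case mixBox _ _ _ _ _ hc _ _ _ _ _ => exact absurd hc (by decide)
  case mixBBox _ _ _ _ _ hc _ _ _ _ _ => exact absurd hc (by decide)
  case mixImp _ _ _ _ _ _ hc _ _ _ _ _ => exact absurd hc (by decide)
  case cutStar _ _ _ _ _ hc _ _ _ _ _ => exact absurd hc (by decide)

/-- GwIKt and GwIKt† derive exactly the same sequents. -/
theorem stmt7_GwIKt_iff_dagger (Γ : FS) (β : Fml) :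
    Der GwIKt Γ β ↔ Der GwIKtD Γ β := by
  constructor
  · rintro ⟨n, h⟩; exact toDagger h
  · rintro ⟨n, h⟩; exact ⟨n, ofDagger h⟩
end
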